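/- Let K be a convex body in R^d in gamma-canonical form for gamma in (0,1], let x ∈ K with x ≠ 0, and let y = t·x for some t >= 1 with y ∈ K (so y lies on the ray from the origin through x with ray(y) <= ray(x)). If delta(y) >= delta(x)/alpha for some alpha >= 1, then v(y) >= (gamma/alpha)^d · v(x), where v(z) denotes the infimum of the Lebesgue measures of caps of K containing z. -/

import Mathlib

open Set MeasureTheory Metric
open scoped ENNReal Pointwise

set_option maxHeartbeats 1000000

/-- A cap of `K`: a nonempty intersection of `K` with a halfspace. -/
def IsCap {d : ℕ} (K C : Set (EuclideanSpace ℝ (Fin d))) : Prop :=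
  C.Nonempty ∧ ∃ u : EuclideanSpace ℝ (Fin d), ‖u‖ = 1 ∧ ∃ c : ℝ,
    C = {x ∈ K | c ≤ (inner ℝ u x : ℝ)}

/-- `v(z)`: the infimum of the volumes of caps of `K` containing `z`. -/
noncomputable def minCapVol {d : ℕ} (K : Set (EuclideanSpace ℝ (Fin d)))
    (z : EuclideanSpace ℝ (Fin d)) : ℝ≥0∞ :=
  sInf {v | ∃ C : Set (EuclideanSpace ℝ (Fin d)), IsCap K C ∧ z ∈ C ∧ v = volume C}

/-- Lemma `vol-delta`: let `K` be a convex body in `γ`-canonical form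
and `y = t·x` (with `t ≥ 1`, `y ∈ K`) a point further out along the ray `Ox` than `x`.
If `δ(y) ≥ δ(x)/α` for some `α ≥ 1`, then `v(y) ≥ (γ/α)^d · v(x)`. -/
theorem minCapVol_ray_le (d : ℕ) (gamma : ℝ) (hγ0 : 0 < gamma) (hγ1 : gamma ≤ 1)
    (K : Set (EuclideanSpace ℝ (Fin d)))
    (hK_compact : IsCompact K) (hK_conv : Convex ℝ K)
    (hK_int : (interior K).Nonempty)
    (hK_ball : closedBall 0 (gamma / 2) ⊆ K) (hK_ball' : K ⊆ closedBall 0 (1 / 2))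
    (x y : EuclideanSpace ℝ (Fin d)) (hx : x ∈ K) (hx0 : x ≠ 0) (hy : y ∈ K)
    (t : ℝ) (ht : 1 ≤ t) (hyt : y = t • x)
    (alpha : ℝ) (halpha : 1 ≤ alpha)
    (hδ : infDist x (frontier K) / alpha ≤ infDist y (frontier K)) :
    ENNReal.ofReal ((gamma / alpha) ^ d) * minCapVol K x ≤ minCapVol K y := by
  classical
  have hα0 : (0:ℝ) < alpha := lt_of_lt_of_le one_pos halpha
  set s : ℝ := gamma / alpha with hs_def
  have hs0 : 0 < s := div_pos hγ0 hα0
  have hs1 : s ≤ 1 := by rw [hs_def, div_le_one hα0]; linarith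
  have hxnorm : 0 < ‖x‖ := norm_pos_iff.mpr hx0
  have h0K : (0 : EuclideanSpace ℝ (Fin d)) ∈ K := hK_ball (by
    simp only [mem_closedBall, dist_self]; positivity)
  -- The set of scalars `c` with `c • x ∈ K`, and its supremum `m`.
  set T : Set ℝ := {c : ℝ | c • x ∈ K} with hT_def
  have hT_closed : IsClosed T :=
    hK_compact.isClosed.preimage (by continuity : Continuous fun c : ℝ => c • x)
  have hT_bdd : BddAbove T := by
    refine ⟨1 / (2 * ‖x‖), fun c hc => ?_⟩
    have h1 := hK_ball' hc
    rw [mem_closedBall_zero_iff, norm_smul, Real.norm_eq_abs] at h1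
    have hc' : c ≤ |c| := le_abs_self c
    rw [le_div_iff₀ (by positivity)]
    nlinarith [mul_nonneg (sub_nonneg.mpr hc') hxnorm.le]
  have h1T : (1:ℝ) ∈ T := by simpa [hT_def] using hx
  have htT : t ∈ T := by rw [hT_def, mem_setOf_eq, ← hyt]; exact hy
  set m : ℝ := sSup T with hm_def
  have hmT : m ∈ T := hT_closed.csSup_mem ⟨1, h1T⟩ hT_bdd
  have htm : t ≤ m := le_csSup hT_bdd htT
  have hm1 : 1 ≤ m := le_trans ht htm
  have hm0 : 0 < m := lt_of_lt_of_le one_pos hm1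
  set x' : EuclideanSpace ℝ (Fin d) := m • x with hx'_def
  have hx'K : x' ∈ K := hmT
  have hx'norm : ‖x'‖ ≤ 1 / 2 := by
    have := hK_ball' hx'K
    rwa [mem_closedBall_zero_iff] at this
  -- `x'` is a frontier point of `K`.
  have hx'_not_int : x' ∉ interior K := by
    intro h
    obtain ⟨ε, hε, hball⟩ := Metric.isOpen_iff.mp isOpen_interior x' h
    set ε' : ℝ := ε / (2 * ‖x‖) with hε'_def
    have hε'0 : 0 < ε' := by positivity
    have hmem : (m + ε') • x ∈ K := by
      apply interior_subset
      apply hball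
      rw [mem_ball]
      have : (m + ε') • x - x' = ε' • x := by
        rw [hx'_def, add_smul]; abel
      rw [dist_eq_norm, this, norm_smul, Real.norm_eq_abs, abs_of_pos hε'0, hε'_def]
      rw [div_mul_eq_mul_div, mul_comm]
      rw [div_lt_iff₀ (by positivity)]
      nlinarith
    have : m + ε' ≤ m := le_csSup hT_bdd hmem
    linarith
  have hx'_frontier : x' ∈ frontier K := by
    rw [hK_compact.isClosed.frontier_eq]
    exact ⟨hx'K, hx'_not_int⟩
  -- scalars `lam`, `mu` with `x = lam • x'`, `y = mu • x'`.
  set lam : ℝ := m⁻¹ with hlam_def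
  set mu : ℝ := t / m with hmu_def
  have hlam0 : 0 < lam := inv_pos.mpr hm0
  have hlam1 : lam ≤ 1 := by rw [hlam_def]; exact inv_le_one_of_one_le₀ hm1
  have hmu1 : mu ≤ 1 := by rw [hmu_def, div_le_one hm0]; exact htm
  have hlam_mu : lam ≤ mu := by
    rw [hlam_def, hmu_def, inv_eq_one_div, div_le_div_iff₀ hm0 hm0]
    nlinarith
  have hx_eq : x = lam • x' := by
    rw [hx'_def, hlam_def, smul_smul, inv_mul_cancel₀ (ne_of_gt hm0), one_smul]
  have hy_eq : y = mu • x' := by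
    rw [hyt, hx'_def, hmu_def, smul_smul, div_mul_cancel₀ _ (ne_of_gt hm0)]
  -- Key inequality (i): `s * (1 - lam) ≤ 1 - mu`.
  have hkey : s * (1 - lam) ≤ 1 - mu := by
    rcases eq_or_lt_of_le hlam1 with hlam_eq | hlam_lt
    · rw [hlam_eq]; simp; linarith
    · -- lower bound for δ(x)
      have hδx : (1 - lam) * (gamma / 2) ≤ infDist x (frontier K) := by
        by_contra hcon
        push_neg at hcon
        obtain ⟨q, hq, hqd⟩ := (infDist_lt_iff ⟨x', hx'_frontier⟩).mp hcon
        -- the ball around x of this radius is inside K, hence inside the interior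
        have hball : ball x ((1 - lam) * (gamma / 2)) ⊆ K := by
          intro w hw
          rw [mem_ball, dist_eq_norm] at hw
          set v : EuclideanSpace ℝ (Fin d) := (1 - lam)⁻¹ • (w - x) with hv_def
          have hvK : v ∈ K := by
            apply hK_ball
            rw [mem_closedBall_zero_iff, hv_def, norm_smul, Real.norm_eq_abs,
              abs_of_pos (inv_pos.mpr (by linarith))]
            calc (1 - lam)⁻¹ * ‖w - x‖ ≤ (1-lam)⁻¹ * ((1 - lam) * (gamma / 2)) :=
                  mul_le_mul_of_nonneg_left (le_of_lt hw) (le_of_lt (inv_pos.mpr (by linarith)))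
              _ = gamma / 2 := by
                  rw [← mul_assoc, inv_mul_cancel₀ (by linarith : (1:ℝ)-lam ≠ 0), one_mul]
          have hw_eq : w = (1 - lam) • v + lam • x' := by
            rw [hv_def, smul_smul, mul_inv_cancel₀ (by linarith : (1:ℝ) - lam ≠ 0), one_smul,
              ← hx_eq]
            abel
          rw [hw_eq]
          exact hK_conv hvK hx'K (by linarith) (le_of_lt hlam0) (by ring)
        have : q ∈ interior K := by
          have hopen : IsOpen (ball x ((1 - lam) * (gamma / 2))) := isOpen_ball
          exact interior_maximal hball hopen (mem_ball.mpr (by rw [dist_comm]; exact hqd))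
        rw [hK_compact.isClosed.frontier_eq] at hq
        exact hq.2 this
      -- upper bound for δ(y)
      have hδy : infDist y (frontier K) ≤ (1 - mu) * (1/2) := by
        calc infDist y (frontier K) ≤ dist y x' := infDist_le_dist_of_mem hx'_frontier
          _ = (1 - mu) * ‖x'‖ := by
              rw [dist_eq_norm, hy_eq, show mu • x' - x' = (mu - 1) • x' by
                rw [sub_smul, one_smul], norm_smul, Real.norm_eq_abs,
                abs_of_nonpos (by linarith)]
              ring
          _ ≤ (1 - mu) * (1/2) := by
              apply mul_le_mul_of_nonneg_left hx'norm (by linarith)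
      have h2 : infDist x (frontier K) ≤ alpha * infDist y (frontier K) := by
        rw [div_le_iff₀ hα0] at hδ; linarith [hδ]
      have h3 : alpha * infDist y (frontier K) ≤ alpha * ((1 - mu) * (1/2)) :=
        mul_le_mul_of_nonneg_left hδy hα0.le
      have h4 : (1 - lam) * (gamma / 2) ≤ alpha * ((1 - mu) * (1/2)) :=
        le_trans hδx (le_trans h2 h3)
      rw [hs_def, div_mul_eq_mul_div, div_le_iff₀ hα0]
      linarith [h4]
  -- Main argument: bound the volume of every cap containing `y`.
  apply le_sInf
  rintro v ⟨C, ⟨hCne, u, hu, c, hC_eq⟩, hyC, rfl⟩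
  rw [hC_eq] at hyC
  obtain ⟨hyK', hcy⟩ := hyC
  -- maximum of the linear functional on K
  obtain ⟨p, hpK, hpmax⟩ := hK_compact.exists_isMaxOn ⟨0, h0K⟩
    ((continuous_const.inner continuous_id).continuousOn :
      ContinuousOn (fun z : EuclideanSpace ℝ (Fin d) => (inner ℝ u z : ℝ)) K)
  set M : ℝ := (inner ℝ u p : ℝ) with hM_def
  have hM0 : 0 ≤ M := by
    have := hpmax h0K
    simpa using this
  have hMx' : (inner ℝ u x' : ℝ) ≤ M := hpmax hx'K
  set a : ℝ := (inner ℝ u x : ℝ) with ha_def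
  -- the cap of K at x in direction u
  set Cx : Set (EuclideanSpace ℝ (Fin d)) := {z ∈ K | a ≤ (inner ℝ u z : ℝ)} with hCx_def
  have hxCx : x ∈ Cx := ⟨hx, le_refl a⟩
  have h1 : minCapVol K x ≤ volume Cx :=
    sInf_le ⟨Cx, ⟨⟨x, hxCx⟩, u, hu, a, rfl⟩, hxCx, rfl⟩
  -- inner products along the ray
  have ha_eq : a = lam * (inner ℝ u x' : ℝ) := by
    rw [ha_def, hx_eq, real_inner_smul_right]
  have hy_inner : (inner ℝ u y : ℝ) = mu * (inner ℝ u x' : ℝ) := by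
    rw [hy_eq, real_inner_smul_right]
  -- the affine contraction maps Cx into C
  have himg : (fun z => (1 - s) • p + s • z) '' Cx ⊆ C := by
    rintro w ⟨z, ⟨hzK, hza⟩, rfl⟩
    rw [hC_eq]
    constructor
    · exact hK_conv hpK hzK (by linarith) (le_of_lt hs0) (by ring)
    · have hinner : (inner ℝ u ((1 - s) • p + s • z) : ℝ)
          = (1 - s) * M + s * (inner ℝ u z : ℝ) := by
        rw [inner_add_right, real_inner_smul_right, real_inner_smul_right]
      rw [hinner]
      have hc_le : c ≤ mu * (inner ℝ u x' : ℝ) := by rw [← hy_inner]; exact hcy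
      have hmulam : s * lam ≤ mu := by
        have h4 : s * lam ≤ 1 * lam := mul_le_mul_of_nonneg_right hs1 hlam0.le
        rw [one_mul] at h4
        exact le_trans h4 hlam_mu
      have hMa' : 0 ≤ M - (inner ℝ u x' : ℝ) := by linarith
      have hfac1 : 0 ≤ (1 - mu - s * (1 - lam)) * M := by
        apply mul_nonneg (by linarith) hM0
      have hfac2 : 0 ≤ (mu - s * lam) * (M - (inner ℝ u x' : ℝ)) := by
        apply mul_nonneg (by linarith) hMa'
      rw [ha_eq] at hza
      have h5 : s * (lam * (inner ℝ u x' : ℝ)) ≤ s * (inner ℝ u z : ℝ) :=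
        mul_le_mul_of_nonneg_left hza hs0.le
      linarith [hfac1, hfac2, h5, hc_le]
  -- volume computation
  have himg_eq : (fun z => (1 - s) • p + s • z) '' Cx = ((1 - s) • p) +ᵥ (s • Cx) := by
    ext w
    simp only [Set.mem_image, Set.mem_vadd_set, Set.mem_smul_set, vadd_eq_add]
    constructor
    · rintro ⟨z, hz, rfl⟩; exact ⟨s • z, ⟨z, hz, rfl⟩, rfl⟩
    · rintro ⟨w', ⟨z, hz, rfl⟩, rfl⟩; exact ⟨z, hz, rfl⟩
  have hvol : ENNReal.ofReal (s ^ d) * volume Cx ≤ volume C := by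
    calc ENNReal.ofReal (s ^ d) * volume Cx
        = volume (s • Cx) := by
          rw [Measure.addHaar_smul, finrank_euclideanSpace_fin,
            abs_of_pos (pow_pos hs0 d)]
      _ = volume (((1 - s) • p) +ᵥ (s • Cx)) := by rw [measure_vadd]
      _ = volume ((fun z => (1 - s) • p + s • z) '' Cx) := by rw [himg_eq]
      _ ≤ volume C := measure_mono himg
  calc ENNReal.ofReal ((gamma / alpha) ^ d) * minCapVol K x
      = ENNReal.ofReal (s ^ d) * minCapVol K x := by rw [hs_def]
    _ ≤ ENNReal.ofReal (s ^ d) * volume Cx := mul_le_mul_right h1 _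
    _ ≤ volume C := hvol
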